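/- (Complete lattice version) Let L be a complete distributive sublattice of a Boolean algebra B (closed under the relevant meets/joins), with a_i < b_i, D = {ê_I}, and f: D → L monotone satisfying (★). Define cl(x) = ⋀{a ∈ L : a ≥ x} and int(x) = ⋁{a ∈ L : a ≤ x} for x ∈ B. Then a polynomial function p over L with monotone coefficients c_I ∈ L satisfies p|_D = f if and only if cl(c_I^-) ≤ c_I ≤ int(c_I^+) for all I ⊆ [n]. -/

import Mathlib

/-- The generalized characteristic vector `ê_I`. -/
def eVec {n : ℕ} {B : Type*} (a b : Fin n → B) (I : Finset (Fin n)) : Fin n → B :=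
  fun i => if i ∈ I then b i else a i

/-- The DNF polynomial function determined by a system of coefficients. -/
def dnf {n : ℕ} {B : Type*} [Lattice B] [BoundedOrder B]
    (c : Finset (Fin n) → B) (x : Fin n → B) : B :=
  (Finset.univ.powerset).sup fun I : Finset (Fin n) => c I ⊓ I.inf x


open Finset

section Aux
variable {B : Type*} [CompleteBooleanAlgebra B] {ι : Type*} [DecidableEq ι]

lemma compl_finset_inf (s : Finset ι) (u : ι → B) :
    (s.inf u)ᶜ = s.sup fun i => (u i)ᶜ := by
  induction s using Finset.induction_on with
  | empty => simp
  | insert _ _ h ih => simp [compl_inf, ih]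

/-- Expansion lemma: `x` is below the join over all `T ⊆ s` of
`x ⊓ ⨅_{i∈T} u i ⊓ ⨅_{i∈s\T} (u i)ᶜ`. -/
lemma expand (s : Finset ι) (u : ι → B) (x : B) :
    x ≤ s.powerset.sup fun T => x ⊓ T.inf u ⊓ (s \ T).inf fun i => (u i)ᶜ := by
  induction s using Finset.induction_on generalizing x with
  | empty => simp
  | @insert k s hk ih =>
    have h1 : x = (x ⊓ u k) ⊔ (x ⊓ (u k)ᶜ) := by
      rw [← inf_sup_left, sup_compl_eq_top, inf_top_eq]
    refine le_trans (le_of_eq h1) (sup_le ?_ ?_)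
    · refine le_trans (ih (x ⊓ u k)) (Finset.sup_le fun T hT => ?_)
      rw [Finset.mem_powerset] at hT
      have hkT : k ∉ T := fun h => hk (hT h)
      refine le_trans ?_ (Finset.le_sup (f := fun T => x ⊓ T.inf u ⊓ (insert k s \ T).inf fun i => (u i)ᶜ)
        (Finset.mem_powerset.2 (Finset.insert_subset_insert k hT)))
      have e1 : (insert k T).inf u = u k ⊓ T.inf u := Finset.inf_insert
      have e2 : insert k s \ insert k T = s \ T := by
        ext j; simp only [Finset.mem_sdiff, Finset.mem_insert]
        constructor
        · rintro ⟨h1 | h1, h2⟩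
          · exact absurd (Or.inl h1) h2
          · exact ⟨h1, fun hj => h2 (Or.inr hj)⟩
        · rintro ⟨h1, h2⟩
          exact ⟨Or.inr h1, fun hj => (hj.elim (fun e => hk (e ▸ h1)) h2)⟩
      rw [e1, e2]
      ac_nf
    · refine le_trans (ih (x ⊓ (u k)ᶜ)) (Finset.sup_le fun T hT => ?_)
      rw [Finset.mem_powerset] at hT
      have hkT : k ∉ T := fun h => hk (hT h)
      refine le_trans ?_ (Finset.le_sup (f := fun T => x ⊓ T.inf u ⊓ (insert k s \ T).inf fun i => (u i)ᶜ)
        (Finset.mem_powerset.2 (hT.trans (Finset.subset_insert k s))))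
      have e2 : insert k s \ T = insert k (s \ T) := by
        ext j; simp only [Finset.mem_sdiff, Finset.mem_insert]
        constructor
        · rintro ⟨h1 | h1, h2⟩
          · exact Or.inl h1
          · exact Or.inr ⟨h1, h2⟩
        · rintro (h1 | ⟨h1, h2⟩)
          · exact ⟨Or.inl h1, fun hj => hkT (h1 ▸ hj)⟩
          · exact ⟨Or.inr h1, h2⟩
      rw [e2, Finset.inf_insert]
      ac_nf

end Aux

section Star
variable {n : ℕ} {B : Type*} [CompleteBooleanAlgebra B]
  (a b : Fin n → B) (f : (Fin n → B) → B)

lemma eVec_mem (I : Finset (Fin n)) {i : Fin n} (hi : i ∈ I) : eVec a b I i = b i :=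
  if_pos hi

lemma eVec_not_mem (I : Finset (Fin n)) {i : Fin n} (hi : i ∉ I) : eVec a b I i = a i :=
  if_neg hi

lemma a_le_eVec (I : Finset (Fin n)) (i : Fin n) (hab : ∀ i, a i ≤ b i) :
    a i ≤ eVec a b I i := by
  unfold eVec; split
  · exact hab i
  · exact le_refl _

lemma eVec_le_b (I : Finset (Fin n)) (i : Fin n) (hab : ∀ i, a i ≤ b i) :
    eVec a b I i ≤ b i := by
  unfold eVec; split
  · exact le_refl _
  · exact hab i

lemma starA
    (hmono : ∀ I J : Finset (Fin n), I ⊆ J → f (eVec a b I) ≤ f (eVec a b J))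
    (hstar : ∀ (I : Finset (Fin n)) (k : Fin n),
      f (eVec a b (insert k I)) ⊓ a k ≤ f (eVec a b I)) (T : Finset (Fin n)) :
    ∀ I, f (eVec a b I) ⊓ T.inf a ≤ f (eVec a b (I \ T)) := by
  induction T using Finset.induction_on with
  | empty => intro I; simp
  | @insert k T hk ih =>
    intro I
    have step : f (eVec a b I) ⊓ a k ≤ f (eVec a b (I.erase k)) := by
      have h1 : I ⊆ insert k (I.erase k) := Finset.subset_insert_iff.2 (le_refl _)
      exact le_trans (inf_le_inf_right _ (hmono _ _ h1)) (hstar (I.erase k) k)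
    have e : I.erase k \ T = I \ insert k T := by
      ext j; simp only [Finset.mem_sdiff, Finset.mem_erase, Finset.mem_insert]; tauto
    calc f (eVec a b I) ⊓ (insert k T).inf a
        = f (eVec a b I) ⊓ a k ⊓ T.inf a := by rw [Finset.inf_insert, inf_assoc]
      _ ≤ f (eVec a b (I.erase k)) ⊓ T.inf a := inf_le_inf_right _ step
      _ ≤ f (eVec a b (I.erase k \ T)) := ih _
      _ = f (eVec a b (I \ insert k T)) := by rw [e]

lemma starB
    (hstar : ∀ (I : Finset (Fin n)) (k : Fin n),
      f (eVec a b I) ≤ f (eVec a b (I.erase k)) ⊔ b k) (T : Finset (Fin n)) :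
    ∀ I, f (eVec a b I) ⊓ T.inf (fun i => (b i)ᶜ) ≤ f (eVec a b (I \ T)) := by
  induction T using Finset.induction_on with
  | empty => intro I; simp
  | @insert k T hk ih =>
    intro I
    have step : f (eVec a b I) ⊓ (b k)ᶜ ≤ f (eVec a b (I.erase k)) := by
      refine le_trans (inf_le_inf_right _ (hstar I k)) ?_
      rw [inf_sup_right]
      simp
    have e : I.erase k \ T = I \ insert k T := by
      ext j; simp only [Finset.mem_sdiff, Finset.mem_erase, Finset.mem_insert]; tauto
    calc f (eVec a b I) ⊓ (insert k T).inf (fun i => (b i)ᶜ)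
        = f (eVec a b I) ⊓ (b k)ᶜ ⊓ T.inf (fun i => (b i)ᶜ) := by
          rw [Finset.inf_insert, inf_assoc]
      _ ≤ f (eVec a b (I.erase k)) ⊓ T.inf (fun i => (b i)ᶜ) := inf_le_inf_right _ step
      _ ≤ f (eVec a b (I.erase k \ T)) := ih _
      _ = f (eVec a b (I \ insert k T)) := by rw [e]

end Star


/-- complete lattice version: if `L` is a complete (distributive)
sublattice of a (complete) Boolean algebra `B`, closed under the relevant meets and
joins, and `f` is monotone and satisfies (★), then a polynomial function over `L` with
monotone coefficients `c_I ∈ L` interpolates `f` on the cuboid vertices if and only if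
`cl(c_I⁻) ≤ c_I ≤ int(c_I⁺)` for all `I`, where `cl(x) = ⋀{a ∈ L : a ≥ x}` and
`int(x) = ⋁{a ∈ L : a ≤ x}`. -/
theorem stmt_17 {n : ℕ} {B : Type*} [CompleteBooleanAlgebra B] (L : Set B)
    (hLinf : ∀ S : Set B, S ⊆ L → sInf S ∈ L) (hLsup : ∀ S : Set B, S ⊆ L → sSup S ∈ L)
    (a b : Fin n → B) (haL : ∀ i, a i ∈ L) (hbL : ∀ i, b i ∈ L)
    (hab : ∀ i, a i < b i)
    (f : (Fin n → B) → B) (hfL : ∀ I : Finset (Fin n), f (eVec a b I) ∈ L)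
    (hmono : ∀ I J : Finset (Fin n), I ⊆ J → f (eVec a b I) ≤ f (eVec a b J))
    (hstar : ∀ (I : Finset (Fin n)) (k : Fin n),
      f (eVec a b (insert k I)) ⊓ a k ≤ f (eVec a b I) ∧
        f (eVec a b I) ≤ f (eVec a b (I.erase k)) ⊔ b k)
    (c : Finset (Fin n) → B) (hcL : ∀ I : Finset (Fin n), c I ∈ L)
    (hc : ∀ I J : Finset (Fin n), I ⊆ J → c I ≤ c J) :
    (∀ J : Finset (Fin n), dnf c (eVec a b J) = f (eVec a b J)) ↔
      (∀ I : Finset (Fin n),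
        sInf {x ∈ L | f (eVec a b I) ⊓ (Finset.univ \ I).inf (fun i => (a i)ᶜ) ≤ x} ≤
            c I ∧
          c I ≤ sSup {x ∈ L | x ≤ f (eVec a b I) ⊔ I.sup (fun i => (b i)ᶜ)}) := by

  have hab' : ∀ i, a i ≤ b i := fun i => (hab i).le
  have lower_iff : ∀ I : Finset (Fin n),
      (sInf {x ∈ L | f (eVec a b I) ⊓ (Finset.univ \ I).inf (fun i => (a i)ᶜ) ≤ x} ≤ c I)
        ↔ f (eVec a b I) ⊓ (Finset.univ \ I).inf (fun i => (a i)ᶜ) ≤ c I := by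
    intro I
    constructor
    · intro h
      exact le_trans (le_sInf fun x hx => hx.2) h
    · intro h
      exact sInf_le ⟨hcL I, h⟩
  have upper_iff : ∀ I : Finset (Fin n),
      (c I ≤ sSup {x ∈ L | x ≤ f (eVec a b I) ⊔ I.sup (fun i => (b i)ᶜ)})
        ↔ c I ≤ f (eVec a b I) ⊔ I.sup (fun i => (b i)ᶜ) := by
    intro I
    constructor
    · intro h
      exact le_trans h (sSup_le fun x hx => hx.2)
    · intro h
      exact le_sSup ⟨hcL I, h⟩
  simp only [lower_iff, upper_iff]
  constructor
  · intro hp I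
    constructor
    · -- lower bound
      rw [← hp I]
      simp only [dnf]
      rw [Finset.sup_inf_distrib_right]
      refine Finset.sup_le fun K _ => ?_
      by_cases hKI : K ⊆ I
      · exact le_trans inf_le_left (le_trans inf_le_left (hc K I hKI))
      · obtain ⟨j, hjK, hjI⟩ := Finset.not_subset.1 hKI
        have h1 : K.inf (eVec a b I) ≤ a j := by
          refine le_trans (Finset.inf_le hjK) ?_
          exact le_of_eq (eVec_not_mem a b I hjI)
        have h2 : (Finset.univ \ I).inf (fun i => (a i)ᶜ) ≤ (a j)ᶜ :=
          Finset.inf_le (Finset.mem_sdiff.2 ⟨Finset.mem_univ j, hjI⟩)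
        calc c K ⊓ K.inf (eVec a b I) ⊓ (Finset.univ \ I).inf (fun i => (a i)ᶜ)
            ≤ a j ⊓ (a j)ᶜ := inf_le_inf (le_trans inf_le_right h1) h2
          _ = ⊥ := inf_compl_eq_bot
          _ ≤ c I := bot_le
    · -- upper bound
      have h1 : c I ⊓ I.inf b ≤ f (eVec a b I) := by
        rw [← hp I]
        simp only [dnf]
        have e : I.inf b = I.inf (eVec a b I) :=
          Finset.inf_congr rfl fun i hi => (eVec_mem a b I hi).symm
        rw [e]
        exact Finset.le_sup (f := fun K => c K ⊓ K.inf (eVec a b I))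
          (Finset.mem_powerset.2 (Finset.subset_univ I))
      calc c I = c I ⊓ (I.inf b ⊔ (I.inf b)ᶜ) := by rw [sup_compl_eq_top, inf_top_eq]
        _ = c I ⊓ I.inf b ⊔ c I ⊓ (I.inf b)ᶜ := inf_sup_left _ _ _
        _ ≤ f (eVec a b I) ⊔ (I.inf b)ᶜ := sup_le_sup h1 inf_le_right
        _ = f (eVec a b I) ⊔ I.sup (fun i => (b i)ᶜ) := by rw [compl_finset_inf]
  · intro hbnd J
    have lower : ∀ I : Finset (Fin n),
        f (eVec a b I) ⊓ (Finset.univ \ I).inf (fun i => (a i)ᶜ) ≤ c I := fun I => (hbnd I).1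
    have upper : ∀ I : Finset (Fin n),
        c I ≤ f (eVec a b I) ⊔ I.sup (fun i => (b i)ᶜ) := fun I => (hbnd I).2
    refine le_antisymm ?_ ?_
    · -- dnf ≤ f
      simp only [dnf]
      refine Finset.sup_le fun I _ => ?_
      have hbpart : (I.sup fun i => (b i)ᶜ) ⊓ I.inf (eVec a b J) ≤ ⊥ := by
        rw [Finset.sup_inf_distrib_right]
        refine Finset.sup_le fun i hi => ?_
        calc (b i)ᶜ ⊓ I.inf (eVec a b J) ≤ (b i)ᶜ ⊓ b i :=
              inf_le_inf_left _ (le_trans (Finset.inf_le hi) (eVec_le_b a b J i hab'))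
          _ = ⊥ := compl_inf_eq_bot
      have hfpart : f (eVec a b I) ⊓ I.inf (eVec a b J) ≤ f (eVec a b J) := by
        have h2 : I.inf (eVec a b J) ≤ (I \ J).inf a := by
          have e : (I \ J).inf (eVec a b J) = (I \ J).inf a :=
            Finset.inf_congr rfl fun i hi => eVec_not_mem a b J (Finset.mem_sdiff.1 hi).2
          rw [← e]
          exact Finset.inf_mono Finset.sdiff_subset
        calc f (eVec a b I) ⊓ I.inf (eVec a b J) ≤ f (eVec a b I) ⊓ (I \ J).inf a :=
              inf_le_inf_left _ h2
          _ ≤ f (eVec a b (I \ (I \ J))) := starA a b f hmono (fun I k => (hstar I k).1) _ _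
          _ ≤ f (eVec a b J) := by
              rw [Finset.sdiff_sdiff_self_left]
              exact hmono _ _ Finset.inter_subset_right
      calc c I ⊓ I.inf (eVec a b J)
          ≤ (f (eVec a b I) ⊔ I.sup fun i => (b i)ᶜ) ⊓ I.inf (eVec a b J) :=
            inf_le_inf_right _ (upper I)
        _ = f (eVec a b I) ⊓ I.inf (eVec a b J) ⊔
              (I.sup fun i => (b i)ᶜ) ⊓ I.inf (eVec a b J) := inf_sup_right _ _ _
        _ ≤ f (eVec a b J) := sup_le hfpart (le_trans hbpart bot_le)
    · -- f ≤ dnf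
      simp only [dnf]
      refine le_trans (expand J b (f (eVec a b J))) (Finset.sup_le fun T hT => ?_)
      rw [Finset.mem_powerset] at hT
      have step1 : f (eVec a b J) ⊓ T.inf b ⊓ (J \ T).inf (fun i => (b i)ᶜ)
          ≤ f (eVec a b T) ⊓ T.inf b := by
        have h1 : f (eVec a b J) ⊓ (J \ T).inf (fun i => (b i)ᶜ) ≤ f (eVec a b T) := by
          refine le_trans (starB a b f (fun I k => (hstar I k).2) _ _) ?_
          rw [Finset.sdiff_sdiff_self_left, Finset.inter_eq_right.2 hT]
        calc f (eVec a b J) ⊓ T.inf b ⊓ (J \ T).inf (fun i => (b i)ᶜ)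
            = f (eVec a b J) ⊓ (J \ T).inf (fun i => (b i)ᶜ) ⊓ T.inf b := by ac_rfl
          _ ≤ f (eVec a b T) ⊓ T.inf b := inf_le_inf_right _ h1
      refine le_trans (le_trans step1 (expand Finset.univ (fun i => (a i)ᶜ)
        (f (eVec a b T) ⊓ T.inf b))) (Finset.sup_le fun S _ => ?_)
      have hcc : ((Finset.univ \ S).inf fun i => ((a i)ᶜ)ᶜ) = (Finset.univ \ S).inf a := by
        simp
      rw [hcc]
      have pF : f (eVec a b T) ⊓ T.inf b ⊓ S.inf (fun i => (a i)ᶜ) ⊓ (Finset.univ \ S).inf a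
          ≤ f (eVec a b T) := (inf_le_left.trans inf_le_left).trans inf_le_left
      have pTb : f (eVec a b T) ⊓ T.inf b ⊓ S.inf (fun i => (a i)ᶜ) ⊓ (Finset.univ \ S).inf a
          ≤ T.inf b := (inf_le_left.trans inf_le_left).trans inf_le_right
      have pS : f (eVec a b T) ⊓ T.inf b ⊓ S.inf (fun i => (a i)ᶜ) ⊓ (Finset.univ \ S).inf a
          ≤ S.inf (fun i => (a i)ᶜ) := inf_le_left.trans inf_le_right
      have pU : f (eVec a b T) ⊓ T.inf b ⊓ S.inf (fun i => (a i)ᶜ) ⊓ (Finset.univ \ S).inf a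
          ≤ (Finset.univ \ S).inf a := inf_le_right
      set K := (T ∩ S) ∪ (Finset.univ \ S) with hK
      have hfK : f (eVec a b T) ⊓ T.inf b ⊓ S.inf (fun i => (a i)ᶜ) ⊓ (Finset.univ \ S).inf a
          ≤ f (eVec a b K) := by
        have hTS : T \ S ⊆ Finset.univ \ S := by
          intro i hi
          exact Finset.mem_sdiff.2 ⟨Finset.mem_univ i, (Finset.mem_sdiff.1 hi).2⟩
        calc f (eVec a b T) ⊓ T.inf b ⊓ S.inf (fun i => (a i)ᶜ) ⊓ (Finset.univ \ S).inf a
            ≤ f (eVec a b T) ⊓ (T \ S).inf a :=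
              le_inf pF (pU.trans (Finset.inf_mono hTS))
          _ ≤ f (eVec a b (T \ (T \ S))) := starA a b f hmono (fun I k => (hstar I k).1) _ _
          _ ≤ f (eVec a b K) := by
              rw [Finset.sdiff_sdiff_self_left]
              exact hmono _ _ Finset.subset_union_left
      have hsub : Finset.univ \ K ⊆ S := by
        intro j hj
        rw [Finset.mem_sdiff, hK] at hj
        by_contra hjS
        exact hj.2 (Finset.mem_union.2 (Or.inr (Finset.mem_sdiff.2 ⟨Finset.mem_univ j, hjS⟩)))
      have h1 : f (eVec a b T) ⊓ T.inf b ⊓ S.inf (fun i => (a i)ᶜ) ⊓ (Finset.univ \ S).inf a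
          ≤ c K := le_trans (le_inf hfK (pS.trans (Finset.inf_mono hsub))) (lower K)
      have h2 : f (eVec a b T) ⊓ T.inf b ⊓ S.inf (fun i => (a i)ᶜ) ⊓ (Finset.univ \ S).inf a
          ≤ K.inf (eVec a b J) := by
        refine Finset.le_inf fun i hi => ?_
        rcases Finset.mem_union.1 hi with h | h
        · obtain ⟨hiT, _⟩ := Finset.mem_inter.1 h
          rw [eVec_mem a b J (hT hiT)]
          exact pTb.trans (Finset.inf_le hiT)
        · exact pU.trans ((Finset.inf_le h).trans (a_le_eVec a b J i hab'))
      exact le_trans (le_inf h1 h2)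
        (Finset.le_sup (f := fun I => c I ⊓ I.inf (eVec a b J))
          (Finset.mem_powerset.2 (Finset.subset_univ K)))
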